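/- Let X ⊆ ℝ^d be a nonempty closed convex set with metric projection P_X, and let f_1, …, f_n : ℝ^d → ℝ be differentiable, μ-strongly convex and L-smooth with 0 < μ ≤ L; set f = (1/n)Σ_l f_l and let x* be the unique minimizer of f over X. Let φ, π ∈ ℝⁿ be positive stochastic vectors, 0 < η < 1/(nL), λ ∈ (0, 1], and x_1, …, x_n ∈ ℝ^d. Define w_i = (1 − λ)x_i + λ P_X(x_i − η n π_i ∇f(x_i)). Then D(w, φ) ≤ q_π(η, λ)·D(x, φ) + 2λ·q_π(η, 1)·√(Σ_i φ_i ‖x_i − x*‖²), where q_π(η, λ) = max_i (1 − λ·η n π_i·μ). -/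

import Mathlib

set_option linter.unusedSectionVars false
set_option linter.unusedVariables false
set_option maxHeartbeats 1000000

open Finset RealInnerProductSpace

section Aux
variable {H : Type*} [NormedAddCommGroup H] [InnerProductSpace ℝ H] [CompleteSpace H]

lemma line_hasDerivAt {F : H → ℝ} {g : H → H} (hdiff : ∀ v, HasGradientAt F (g v) v)
    (x v : H) (t : ℝ) :
    HasDerivAt (fun s : ℝ => F (x + s • v)) ⟪g (x + t • v), v⟫ t := by
  have hline : HasDerivAt (fun s : ℝ => x + s • v) v t := by
    simpa using ((hasDerivAt_id t).smul_const v).const_add x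
  have := (hdiff (x + t • v)).hasFDerivAt.comp_hasDerivAt t hline
  simpa [InnerProductSpace.toDual_apply_apply, Function.comp_def] using this

lemma quad_bounds {F : H → ℝ} {g : H → H} {μ L : ℝ} (hL : 0 ≤ L)
    (hdiff : ∀ v, HasGradientAt F (g v) v)
    (hmono : ∀ u v, μ * ‖u - v‖ ^ 2 ≤ ⟪g u - g v, u - v⟫)
    (hlip : ∀ u v, ‖g u - g v‖ ≤ L * ‖u - v‖) (x y : H) :
    F x + ⟪g x, y - x⟫ + μ / 2 * ‖y - x‖ ^ 2 ≤ F y ∧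
      F y ≤ F x + ⟪g x, y - x⟫ + L / 2 * ‖y - x‖ ^ 2 := by
  set v := y - x with hv
  have hgc : Continuous g := by
    refine (LipschitzWith.of_dist_le_mul (K := Real.toNNReal L) (f := g) ?_).continuous
    intro a b
    simpa [dist_eq_norm, Real.coe_toNNReal L hL] using hlip a b
  have hcont : Continuous fun t : ℝ => ⟪g (x + t • v), v⟫ := by
    exact ((hgc.comp (continuous_const.add (continuous_id.smul continuous_const)))).inner
      continuous_const
  have hFTC : F y - F x = ∫ t in (0:ℝ)..1, ⟪g (x + t • v), v⟫ := by
    have := intervalIntegral.integral_eq_sub_of_hasDerivAt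
      (f := fun s : ℝ => F (x + s • v)) (f' := fun t => ⟪g (x + t • v), v⟫)
      (a := 0) (b := 1) (fun t _ => line_hasDerivAt hdiff x v t)
      (hcont.intervalIntegrable 0 1)
    simpa [hv] using this.symm
  have hlow : ∀ t ∈ Set.Icc (0:ℝ) 1, ⟪g x, v⟫ + μ * t * ‖v‖ ^ 2 ≤ ⟪g (x + t • v), v⟫ := by
    intro t ht
    have h1 : ⟪g (x + t • v), v⟫ - ⟪g x, v⟫ = ⟪g (x + t • v) - g x, v⟫ := by
      rw [inner_sub_left]
    rcases eq_or_lt_of_le ht.1 with h0 | h0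
    · simp [← h0]
    · have := hmono (x + t • v) x
      have he : (x + t • v) - x = t • v := by abel
      rw [he, inner_smul_right, norm_smul] at this
      have : μ * t ^ 2 * ‖v‖ ^ 2 ≤ t * ⟪g (x + t • v) - g x, v⟫ := by
        rw [Real.norm_eq_abs, abs_of_pos h0] at this; nlinarith [this]
      nlinarith [this, h0]
  have hup : ∀ t ∈ Set.Icc (0:ℝ) 1, ⟪g (x + t • v), v⟫ ≤ ⟪g x, v⟫ + L * t * ‖v‖ ^ 2 := by
    intro t ht
    have h1 : ⟪g (x + t • v), v⟫ - ⟪g x, v⟫ = ⟪g (x + t • v) - g x, v⟫ := by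
      rw [inner_sub_left]
    have h2 : ⟪g (x + t • v) - g x, v⟫ ≤ ‖g (x + t • v) - g x‖ * ‖v‖ := real_inner_le_norm _ _
    have h3 : ‖g (x + t • v) - g x‖ ≤ L * (t * ‖v‖) := by
      have := hlip (x + t • v) x
      have he : (x + t • v) - x = t • v := by abel
      rw [he, norm_smul, Real.norm_eq_abs, abs_of_nonneg ht.1] at this
      simpa [mul_assoc] using this
    nlinarith [norm_nonneg v, mul_nonneg (mul_nonneg hL ht.1) (sq_nonneg ‖v‖),
      mul_le_mul_of_nonneg_right h3 (norm_nonneg v)]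
  have hint : ∀ c : ℝ, ∫ t in (0:ℝ)..1, (⟪g x, v⟫ + c * t * ‖v‖ ^ 2)
      = ⟪g x, v⟫ + c / 2 * ‖v‖ ^ 2 := by
    intro c
    have he : (fun t : ℝ => ⟪g x, v⟫ + c * t * ‖v‖ ^ 2)
        = fun t : ℝ => ⟪g x, v⟫ + (c * ‖v‖ ^ 2) * t := by funext t; ring
    rw [he, intervalIntegral.integral_add intervalIntegrable_const
      ((by fun_prop : Continuous fun t : ℝ => c * ‖v‖ ^ 2 * t).intervalIntegrable 0 1),
      intervalIntegral.integral_const_mul]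
    simp [integral_id]
    ring
  have hle1 : F y - F x ≤ ⟪g x, v⟫ + L / 2 * ‖v‖ ^ 2 := by
    rw [hFTC, ← hint L]
    apply intervalIntegral.integral_mono_on (by norm_num) (hcont.intervalIntegrable 0 1)
      ((by fun_prop : Continuous fun t : ℝ => ⟪g x, v⟫ + L * t * ‖v‖ ^ 2).intervalIntegrable 0 1)
    exact hup
  have hge1 : ⟪g x, v⟫ + μ / 2 * ‖v‖ ^ 2 ≤ F y - F x := by
    rw [hFTC, ← hint μ]
    apply intervalIntegral.integral_mono_on (by norm_num)
      ((by fun_prop : Continuous fun t : ℝ => ⟪g x, v⟫ + μ * t * ‖v‖ ^ 2).intervalIntegrable 0 1)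
      (hcont.intervalIntegrable 0 1)
    exact hlow
  constructor <;> [linarith [hge1]; linarith [hle1]]

lemma coco {F : H → ℝ} {g : H → H} {μ L : ℝ} (hμ : 0 < μ) (hμL : μ ≤ L)
    (hdiff : ∀ v, HasGradientAt F (g v) v)
    (hmono : ∀ u v, μ * ‖u - v‖ ^ 2 ≤ ⟪g u - g v, u - v⟫)
    (hlip : ∀ u v, ‖g u - g v‖ ≤ L * ‖u - v‖) (u v : H) :
    ‖(g u - μ • u) - (g v - μ • v)‖ ^ 2
      ≤ (L - μ) * ⟪(g u - μ • u) - (g v - μ • v), u - v⟫ := by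
  rcases eq_or_lt_of_le hμL with heq | hlt
  · -- L = μ : the difference is zero
    have hz : ‖(g u - μ • u) - (g v - μ • v)‖ ^ 2 ≤ 0 := by
      have hrw : (g u - μ • u) - (g v - μ • v) = (g u - g v) - μ • (u - v) := by
        rw [smul_sub]; abel
      rw [hrw]
      have e1 : ‖(g u - g v) - μ • (u - v)‖ ^ 2
          = ‖g u - g v‖ ^ 2 - 2 * (μ * ⟪g u - g v, u - v⟫) + μ ^ 2 * ‖u - v‖ ^ 2 := by
        rw [norm_sub_sq_real, real_inner_smul_right, norm_smul, Real.norm_eq_abs,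
          abs_of_pos hμ, mul_pow]
      have e2 : ‖g u - g v‖ ^ 2 ≤ L ^ 2 * ‖u - v‖ ^ 2 := by
        have := hlip u v
        nlinarith [norm_nonneg (g u - g v), norm_nonneg (u - v)]
      have e3 := hmono u v
      have e3' : μ * (μ * ‖u - v‖ ^ 2) ≤ μ * ⟪g u - g v, u - v⟫ :=
        mul_le_mul_of_nonneg_left e3 hμ.le
      have hL2 : μ ^ 2 = L ^ 2 := by rw [heq]
      rw [e1]
      nlinarith [e2, e3', hL2]
    have hz2 : ‖(g u - μ • u) - (g v - μ • v)‖ = 0 := by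
      nlinarith [norm_nonneg ((g u - μ • u) - (g v - μ • v))]
    have : (g u - μ • u) - (g v - μ • v) = 0 := by rwa [norm_eq_zero] at hz2
    rw [this]
    simp
  · have hKpos : (0:ℝ) < L - μ := by linarith
    set c := 1 / (L - μ) with hc
    have hcpos : 0 < c := by positivity
    have hKc : (L - μ) * c = 1 := by rw [hc]; exact mul_one_div_cancel hKpos.ne'
    have lower : ∀ p q : H,
        (F p - μ / 2 * ‖p‖ ^ 2) + ⟪g p - μ • p, q - p⟫ ≤ F q - μ / 2 * ‖q‖ ^ 2 := by
      intro p q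
      have qb := (quad_bounds (le_trans hμ.le hμL) hdiff hmono hlip p q).1
      have e1 : ⟪g p - μ • p, q - p⟫ = ⟪g p, q - p⟫ - μ * ⟪p, q - p⟫ := by
        rw [inner_sub_left, real_inner_smul_left]
      have e2 : ⟪p, q - p⟫ = ⟪p, q⟫ - ‖p‖ ^ 2 := by
        rw [inner_sub_right, real_inner_self_eq_norm_sq]
      have e3 : ‖q - p‖ ^ 2 = ‖q‖ ^ 2 - 2 * ⟪q, p⟫ + ‖p‖ ^ 2 := norm_sub_sq_real q p
      have e4 : ⟪p, q⟫ = ⟪q, p⟫ := real_inner_comm q p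
      rw [e1, e2, e4]
      nlinarith [qb, e3]
    have upper : ∀ p q : H,
        F q - μ / 2 * ‖q‖ ^ 2
          ≤ (F p - μ / 2 * ‖p‖ ^ 2) + ⟪g p - μ • p, q - p⟫
            + (L - μ) / 2 * ‖q - p‖ ^ 2 := by
      intro p q
      have qb := (quad_bounds (le_trans hμ.le hμL) hdiff hmono hlip p q).2
      have e1 : ⟪g p - μ • p, q - p⟫ = ⟪g p, q - p⟫ - μ * ⟪p, q - p⟫ := by
        rw [inner_sub_left, real_inner_smul_left]
      have e2 : ⟪p, q - p⟫ = ⟪p, q⟫ - ‖p‖ ^ 2 := by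
        rw [inner_sub_right, real_inner_self_eq_norm_sq]
      have e3 : ‖q - p‖ ^ 2 = ‖q‖ ^ 2 - 2 * ⟪q, p⟫ + ‖p‖ ^ 2 := norm_sub_sq_real q p
      have e4 : ⟪p, q⟫ = ⟪q, p⟫ := real_inner_comm q p
      rw [e1, e2, e4]
      nlinarith [qb, e3]
    have main : ∀ p q : H,
        ⟪g p - μ • p, q - p⟫ + c / 2 * ‖(g q - μ • q) - (g p - μ • p)‖ ^ 2
          ≤ (F q - μ / 2 * ‖q‖ ^ 2) - (F p - μ / 2 * ‖p‖ ^ 2) := by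
      intro p q
      have h1 := lower p (q - c • ((g q - μ • q) - (g p - μ • p)))
      have h2 := upper q (q - c • ((g q - μ • q) - (g p - μ • p)))
      have e1 : ⟪g p - μ • p, (q - c • ((g q - μ • q) - (g p - μ • p))) - p⟫
          = ⟪g p - μ • p, q - p⟫ - c * ⟪g p - μ • p, (g q - μ • q) - (g p - μ • p)⟫ := by
        have heq : (q - c • ((g q - μ • q) - (g p - μ • p))) - p
            = (q - p) - c • ((g q - μ • q) - (g p - μ • p)) := by abel
        rw [heq, inner_sub_right, real_inner_smul_right]
      have e2 : ⟪g q - μ • q, (q - c • ((g q - μ • q) - (g p - μ • p))) - q⟫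
          = -(c * ⟪g q - μ • q, (g q - μ • q) - (g p - μ • p)⟫) := by
        have heq : (q - c • ((g q - μ • q) - (g p - μ • p))) - q
            = -(c • ((g q - μ • q) - (g p - μ • p))) := by abel
        rw [heq, inner_neg_right, real_inner_smul_right]
      have e3 : ‖(q - c • ((g q - μ • q) - (g p - μ • p))) - q‖ ^ 2
          = c ^ 2 * ‖(g q - μ • q) - (g p - μ • p)‖ ^ 2 := by
        have heq : (q - c • ((g q - μ • q) - (g p - μ • p))) - q
            = -(c • ((g q - μ • q) - (g p - μ • p))) := by abel
        rw [heq, norm_neg, norm_smul, Real.norm_eq_abs, abs_of_pos hcpos, mul_pow]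
      have e4 : ⟪g q - μ • q, (g q - μ • q) - (g p - μ • p)⟫
            - ⟪g p - μ • p, (g q - μ • q) - (g p - μ • p)⟫
          = ‖(g q - μ • q) - (g p - μ • p)‖ ^ 2 := by
        rw [← inner_sub_left, real_inner_self_eq_norm_sq]
      rw [e1] at h1
      rw [e2, e3] at h2
      have e5 : (L - μ) / 2 * (c ^ 2 * ‖(g q - μ • q) - (g p - μ • p)‖ ^ 2)
          = c / 2 * ‖(g q - μ • q) - (g p - μ • p)‖ ^ 2 :=
        calc (L - μ) / 2 * (c ^ 2 * ‖(g q - μ • q) - (g p - μ • p)‖ ^ 2)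
            = ((L - μ) * c) * (c / 2 * ‖(g q - μ • q) - (g p - μ • p)‖ ^ 2) := by ring
          _ = c / 2 * ‖(g q - μ • q) - (g p - μ • p)‖ ^ 2 := by rw [hKc, one_mul]
      nlinarith [h1, h2, e4, e5]
    have m1 := main v u
    have m2 := main u v
    have e6 : ‖(g v - μ • v) - (g u - μ • u)‖ = ‖(g u - μ • u) - (g v - μ • v)‖ :=
      norm_sub_rev _ _
    have e8 : ⟪g u - μ • u, v - u⟫ = -⟪g u - μ • u, u - v⟫ := by
      rw [← inner_neg_right]; congr 1; abel
    have e7 : ⟪g v - μ • v, u - v⟫ - ⟪g u - μ • u, u - v⟫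
        = -⟪(g u - μ • u) - (g v - μ • v), u - v⟫ := by
      rw [← inner_sub_left, ← inner_neg_left]; congr 1; abel
    rw [e8] at m2
    have sum : -⟪(g u - μ • u) - (g v - μ • v), u - v⟫
        + c * ‖(g u - μ • u) - (g v - μ • v)‖ ^ 2 ≤ 0 := by
      rw [← e7]
      rw [e6] at m2
      linarith [m1, m2]
    have hfin : c * ‖(g u - μ • u) - (g v - μ • v)‖ ^ 2
        ≤ ⟪(g u - μ • u) - (g v - μ • v), u - v⟫ := by linarith
    calc ‖(g u - μ • u) - (g v - μ • v)‖ ^ 2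
        = (L - μ) * (c * ‖(g u - μ • u) - (g v - μ • v)‖ ^ 2) := by
          rw [← mul_assoc, hKc, one_mul]
      _ ≤ (L - μ) * ⟪(g u - μ • u) - (g v - μ • v), u - v⟫ :=
          mul_le_mul_of_nonneg_left hfin hKpos.le

lemma contraction {F : H → ℝ} {g : H → H} {μ L α : ℝ} (hμ : 0 < μ) (hμL : μ ≤ L)
    (hdiff : ∀ v, HasGradientAt F (g v) v)
    (hmono : ∀ u v, μ * ‖u - v‖ ^ 2 ≤ ⟪g u - g v, u - v⟫)
    (hlip : ∀ u v, ‖g u - g v‖ ≤ L * ‖u - v‖)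
    (hα0 : 0 ≤ α) (hαL : α * L ≤ 1) (u v : H) :
    ‖(u - α • g u) - (v - α • g v)‖ ≤ (1 - α * μ) * ‖u - v‖ := by
  have hco := coco hμ hμL hdiff hmono hlip u v
  have hμα : α * μ ≤ 1 := le_trans (by nlinarith) hαL
  have h1 : 0 ≤ ⟪(g u - μ • u) - (g v - μ • v), u - v⟫ := by
    have hrw : (g u - μ • u) - (g v - μ • v) = (g u - g v) - μ • (u - v) := by
      rw [smul_sub]; abel
    rw [hrw, inner_sub_left, real_inner_smul_left, real_inner_self_eq_norm_sq]
    linarith [hmono u v]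
  have hvec : (u - α • g u) - (v - α • g v)
      = (1 - α * μ) • (u - v) - α • ((g u - μ • u) - (g v - μ • v)) := by
    module
  have hsq : ‖(1 - α * μ) • (u - v) - α • ((g u - μ • u) - (g v - μ • v))‖ ^ 2
      = (1 - α * μ) ^ 2 * ‖u - v‖ ^ 2
        - 2 * ((1 - α * μ) * (α * ⟪u - v, (g u - μ • u) - (g v - μ • v)⟫))
        + α ^ 2 * ‖(g u - μ • u) - (g v - μ • v)‖ ^ 2 := by
    rw [norm_sub_sq_real, real_inner_smul_left, real_inner_smul_right, norm_smul, norm_smul,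
      Real.norm_eq_abs, Real.norm_eq_abs, abs_of_nonneg hα0,
      abs_of_nonneg (by linarith : (0:ℝ) ≤ 1 - α * μ), mul_pow, mul_pow]
  have hcomm : ⟪u - v, (g u - μ • u) - (g v - μ • v)⟫
      = ⟪(g u - μ • u) - (g v - μ • v), u - v⟫ := real_inner_comm _ _
  have key : ‖(u - α • g u) - (v - α • g v)‖ ^ 2 ≤ ((1 - α * μ) * ‖u - v‖) ^ 2 := by
    rw [hvec, hsq, hcomm]
    have hh : α ^ 2 * ‖(g u - μ • u) - (g v - μ • v)‖ ^ 2
        ≤ α ^ 2 * ((L - μ) * ⟪(g u - μ • u) - (g v - μ • v), u - v⟫) :=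
      mul_le_mul_of_nonneg_left hco (sq_nonneg α)
    nlinarith [hh, h1, mul_nonneg hα0 h1, mul_nonneg (mul_nonneg hα0 hα0) h1]
  have h2 : (0:ℝ) ≤ (1 - α * μ) * ‖u - v‖ := mul_nonneg (by linarith) (norm_nonneg _)
  calc ‖(u - α • g u) - (v - α • g v)‖
      = Real.sqrt (‖(u - α • g u) - (v - α • g v)‖ ^ 2) := by
        rw [Real.sqrt_sq (norm_nonneg _)]
    _ ≤ Real.sqrt (((1 - α * μ) * ‖u - v‖) ^ 2) := Real.sqrt_le_sqrt key
    _ = (1 - α * μ) * ‖u - v‖ := Real.sqrt_sq h2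


lemma small_step {s B : ℝ} (h : ∀ t : ℝ, 0 < t → t ≤ 1 → s ≤ t * B) : s ≤ 0 := by
  by_contra hs
  push_neg at hs
  have hB : 0 < B := by
    by_contra hB
    push_neg at hB
    have := h 1 one_pos le_rfl
    nlinarith
  have ht0 : 0 < min 1 (s / (2 * B)) := lt_min one_pos (by positivity)
  have := h _ ht0 (min_le_left _ _)
  have h2 : min 1 (s / (2 * B)) * B ≤ s / 2 := by
    have hle : min 1 (s / (2 * B)) ≤ s / (2 * B) := min_le_right _ _
    calc min 1 (s / (2 * B)) * B ≤ s / (2 * B) * B := mul_le_mul_of_nonneg_right hle hB.le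
      _ = s / 2 := by field_simp
  linarith

lemma proj_obtuse {X : Set H} (hXconvex : Convex ℝ X)
    {P : H → H} (hPmem : ∀ v, P v ∈ X) (hPproj : ∀ v, ∀ u ∈ X, ‖v - P v‖ ≤ ‖v - u‖)
    (v : H) {u : H} (hu : u ∈ X) : ⟪v - P v, u - P v⟫ ≤ 0 := by
  have key : ∀ t : ℝ, 0 < t → t ≤ 1 →
      2 * ⟪v - P v, u - P v⟫ ≤ t * ‖u - P v‖ ^ 2 := by
    intro t ht0 ht1
    have hmem : P v + t • (u - P v) ∈ X := by
      have hc := hXconvex (hPmem v) hu (by linarith : (0:ℝ) ≤ 1 - t) ht0.le (by ring)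
      have hrw : P v + t • (u - P v) = (1 - t) • P v + t • u := by
        rw [smul_sub, sub_smul, one_smul]; abel
      rw [hrw]; exact hc
    have hle := hPproj v _ hmem
    have hexp : ‖v - (P v + t • (u - P v))‖ ^ 2
        = ‖v - P v‖ ^ 2 - 2 * (t * ⟪v - P v, u - P v⟫) + t ^ 2 * ‖u - P v‖ ^ 2 := by
      have hrw : v - (P v + t • (u - P v)) = (v - P v) - t • (u - P v) := by abel
      rw [hrw, norm_sub_sq_real, real_inner_smul_right, norm_smul, Real.norm_eq_abs,
        abs_of_pos ht0, mul_pow]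
    have hsq : ‖v - P v‖ ^ 2 ≤ ‖v - (P v + t • (u - P v))‖ ^ 2 := by
      nlinarith [hle, norm_nonneg (v - (P v + t • (u - P v))), norm_nonneg (v - P v)]
    rw [hexp] at hsq
    nlinarith [hsq, ht0, ht1, sq_nonneg t]
  have := small_step (s := 2 * ⟪v - P v, u - P v⟫) (B := ‖u - P v‖ ^ 2) key
  linarith

lemma proj_nonexp {X : Set H} (hXconvex : Convex ℝ X)
    {P : H → H} (hPmem : ∀ v, P v ∈ X) (hPproj : ∀ v, ∀ u ∈ X, ‖v - P v‖ ≤ ‖v - u‖)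
    (a b : H) : ‖P a - P b‖ ≤ ‖a - b‖ := by
  have h1 := proj_obtuse hXconvex hPmem hPproj a (hPmem b)
  have h2 := proj_obtuse hXconvex hPmem hPproj b (hPmem a)
  have e1 : ⟪(a - P a) - (b - P b), P a - P b⟫
      = ⟪a - b, P a - P b⟫ - ‖P a - P b‖ ^ 2 := by
    have hrw : (a - P a) - (b - P b) = (a - b) - (P a - P b) := by abel
    rw [hrw, inner_sub_left, real_inner_self_eq_norm_sq]
  have e2 : ⟪(a - P a) - (b - P b), P a - P b⟫
      = ⟪a - P a, P a - P b⟫ - ⟪b - P b, P a - P b⟫ := inner_sub_left _ _ _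
  have e3 : ⟪a - P a, P a - P b⟫ = -⟪a - P a, P b - P a⟫ := by
    rw [← inner_neg_right]; congr 1; abel
  have key : ‖P a - P b‖ ^ 2 ≤ ⟪a - b, P a - P b⟫ := by
    rw [e2, e3] at e1
    linarith [h1, h2]
  have hcs : ⟪a - b, P a - P b⟫ ≤ ‖a - b‖ * ‖P a - P b‖ := real_inner_le_norm _ _
  rcases (norm_nonneg (P a - P b)).lt_or_eq with hpos | h0
  · nlinarith [key, hcs]
  · rw [← h0]; exact norm_nonneg _

lemma var_ineq {X : Set H} (hXconvex : Convex ℝ X) {F : H → ℝ} {g : H → H} {C : ℝ}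
    (hC : 0 ≤ C) (hupper : ∀ x y : H, F y ≤ F x + ⟪g x, y - x⟫ + C / 2 * ‖y - x‖ ^ 2)
    {xs : H} (hxsmem : xs ∈ X) (hxsmin : ∀ u ∈ X, F xs ≤ F u)
    {u : H} (hu : u ∈ X) : 0 ≤ ⟪g xs, u - xs⟫ := by
  have key : ∀ t : ℝ, 0 < t → t ≤ 1 → -⟪g xs, u - xs⟫ ≤ t * (C / 2 * ‖u - xs‖ ^ 2) := by
    intro t ht0 ht1
    have hmem : xs + t • (u - xs) ∈ X := by
      have hc := hXconvex hxsmem hu (by linarith : (0:ℝ) ≤ 1 - t) ht0.le (by ring)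
      have hrw : xs + t • (u - xs) = (1 - t) • xs + t • u := by
        rw [smul_sub, sub_smul, one_smul]; abel
      rw [hrw]; exact hc
    have hub := hupper xs (xs + t • (u - xs))
    have hlb := hxsmin _ hmem
    have e1 : (xs + t • (u - xs)) - xs = t • (u - xs) := by abel
    rw [e1, real_inner_smul_right, norm_smul, Real.norm_eq_abs, abs_of_pos ht0,
      mul_pow] at hub
    have h3 : 0 ≤ t * ⟪g xs, u - xs⟫ + C / 2 * (t ^ 2 * ‖u - xs‖ ^ 2) := by linarith
    have h4 : (-⟪g xs, u - xs⟫) * t ≤ (t * (C / 2 * ‖u - xs‖ ^ 2)) * t := by nlinarith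
    exact le_of_mul_le_mul_right h4 ht0
  have := small_step key
  linarith

lemma proj_fixed {X : Set H} (hXconvex : Convex ℝ X)
    {P : H → H} (hPmem : ∀ v, P v ∈ X) (hPproj : ∀ v, ∀ u ∈ X, ‖v - P v‖ ≤ ‖v - u‖)
    {xs gx : H} (hxsmem : xs ∈ X) (hvi : ∀ u ∈ X, 0 ≤ ⟪gx, u - xs⟫)
    {α : ℝ} (hα : 0 ≤ α) : P (xs - α • gx) = xs := by
  have hmin : ∀ u ∈ X, ‖(xs - α • gx) - xs‖ ≤ ‖(xs - α • gx) - u‖ := by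
    intro u hu
    have e0 : (xs - α • gx) - xs = -(α • gx) := by abel
    have e1 : ⟪(xs - α • gx) - xs, xs - u⟫ = α * ⟪gx, u - xs⟫ := by
      rw [e0, inner_neg_left, real_inner_smul_left]
      have : ⟪gx, xs - u⟫ = -⟪gx, u - xs⟫ := by
        rw [← inner_neg_right]; congr 1; abel
      rw [this]; ring
    have hexp : ‖(xs - α • gx) - u‖ ^ 2
        = ‖(xs - α • gx) - xs‖ ^ 2 + 2 * (α * ⟪gx, u - xs⟫) + ‖xs - u‖ ^ 2 := by
      have hrw : (xs - α • gx) - u = ((xs - α • gx) - xs) + (xs - u) := by abel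
      rw [hrw, norm_add_sq_real, e1]
    have h2 : ‖(xs - α • gx) - xs‖ ^ 2 ≤ ‖(xs - α • gx) - u‖ ^ 2 := by
      nlinarith [mul_nonneg hα (hvi u hu), sq_nonneg ‖xs - u‖]
    nlinarith [norm_nonneg ((xs - α • gx) - xs), norm_nonneg ((xs - α • gx) - u), h2]
  have h1 : ‖(xs - α • gx) - P (xs - α • gx)‖ ≤ ‖(xs - α • gx) - xs‖ :=
    hPproj _ xs hxsmem
  have h2 : ‖(xs - α • gx) - xs‖ ≤ ‖(xs - α • gx) - P (xs - α • gx)‖ :=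
    hmin _ (hPmem _)
  have he : ‖(xs - α • gx) - P (xs - α • gx)‖ = ‖(xs - α • gx) - xs‖ :=
    le_antisymm h1 h2
  have hmmem : (1/2 : ℝ) • P (xs - α • gx) + (1/2 : ℝ) • xs ∈ X :=
    hXconvex (hPmem _) hxsmem (by norm_num) (by norm_num) (by norm_num)
  have h3 := hmin _ hmmem
  have hrw : (xs - α • gx) - ((1/2 : ℝ) • P (xs - α • gx) + (1/2 : ℝ) • xs)
      = (1/2 : ℝ) • ((xs - α • gx) - P (xs - α • gx))
        + (1/2 : ℝ) • ((xs - α • gx) - xs) := by module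
  have hexp2 : ‖(xs - α • gx) - ((1/2 : ℝ) • P (xs - α • gx) + (1/2 : ℝ) • xs)‖ ^ 2
      = (1/4) * ‖(xs - α • gx) - P (xs - α • gx)‖ ^ 2
        + (1/2) * ⟪(xs - α • gx) - P (xs - α • gx), (xs - α • gx) - xs⟫
        + (1/4) * ‖(xs - α • gx) - xs‖ ^ 2 := by
    rw [hrw, norm_add_sq_real, real_inner_smul_left, real_inner_smul_right, norm_smul,
      norm_smul, Real.norm_eq_abs, abs_of_pos (by norm_num : (0:ℝ) < 1/2), mul_pow]
    ring
  have h4 : ‖(xs - α • gx) - xs‖ ^ 2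
      ≤ ‖(xs - α • gx) - ((1/2 : ℝ) • P (xs - α • gx) + (1/2 : ℝ) • xs)‖ ^ 2 := by
    nlinarith [h3, norm_nonneg ((xs - α • gx) - ((1/2 : ℝ) • P (xs - α • gx) + (1/2 : ℝ) • xs)),
      norm_nonneg ((xs - α • gx) - xs)]
  rw [hexp2, he] at h4
  have h5 : ‖(xs - α • gx) - xs‖ ^ 2
      ≤ ⟪(xs - α • gx) - P (xs - α • gx), (xs - α • gx) - xs⟫ := by linarith
  have h6 : ‖P (xs - α • gx) - xs‖ ^ 2
      = ‖(xs - α • gx) - xs‖ ^ 2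
        - 2 * ⟪(xs - α • gx) - P (xs - α • gx), (xs - α • gx) - xs⟫
        + ‖(xs - α • gx) - P (xs - α • gx)‖ ^ 2 := by
    have hrw2 : P (xs - α • gx) - xs
        = ((xs - α • gx) - xs) - ((xs - α • gx) - P (xs - α • gx)) := by abel
    rw [hrw2, norm_sub_sq_real, real_inner_comm]
  have h7 : ‖P (xs - α • gx) - xs‖ ^ 2 ≤ 0 := by
    rw [h6, he]; linarith
  have h8 : ‖P (xs - α • gx) - xs‖ = 0 := by
    nlinarith [norm_nonneg (P (xs - α • gx) - xs)]
  rw [norm_eq_zero] at h8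
  exact sub_eq_zero.mp h8


lemma hasGradientAt_avg {n : ℕ} {f : Fin n → H → ℝ}
    (hfdiff : ∀ i, Differentiable ℝ (f i)) (v : H) :
    HasGradientAt (fun v => (1 / (n : ℝ)) * ∑ l, f l v)
      ((1 / (n : ℝ)) • ∑ l, gradient (f l) v) v := by
  have h2 : HasFDerivAt (fun v => ∑ l, f l v)
      (∑ l, InnerProductSpace.toDual ℝ H (gradient (f l) v)) v :=
    HasFDerivAt.fun_sum (fun l _ => ((hfdiff l v).hasGradientAt).hasFDerivAt)
  have h3 := h2.const_mul ((1:ℝ) / n)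
  have he : ((1:ℝ) / n) • ∑ l, InnerProductSpace.toDual ℝ H (gradient (f l) v)
      = InnerProductSpace.toDual ℝ H (((1:ℝ) / n) • ∑ l, gradient (f l) v) := by
    rw [map_smul, map_sum]
  rw [he] at h3
  simpa only [LinearIsometryEquiv.symm_apply_apply, one_div] using h3.hasGradientAt

end Aux

/-- Consensus error `D(u, a) = √(Σ_i Σ_j a_i a_j ‖u_i − u_j‖²)`. -/
noncomputable def Derr {n d : ℕ} (a : Fin n → ℝ) (u : Fin n → EuclideanSpace ℝ (Fin d)) : ℝ :=
  Real.sqrt (∑ i, ∑ j, a i * a j * ‖u i - u j‖ ^ 2)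

/-- `q_π(η, λ) = max_i (1 − λ·ηnπ_i·μ)`. -/
noncomputable def qmax {n : ℕ} [NeZero n] (π : Fin n → ℝ) (μ η lam : ℝ) : ℝ :=
  Finset.univ.sup' Finset.univ_nonempty (fun i => 1 - lam * (η * n * π i) * μ)

/-- Consensus under perfect gradient knowledge,
Proposition `w-consensus-bound`. With `w_i = (1 − λ)x_i + λP(x_i − ηnπ_i ∇f(x_i))`,
`D(w, φ) ≤ q_π(η, λ)·D(x, φ) + 2λ·q_π(η, 1)·√(Σ_i φ_i ‖x_i − x*‖²)`. -/
theorem perfect_gradient_consensus_bound {n d : ℕ} [NeZero n]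
    (X : Set (EuclideanSpace ℝ (Fin d))) (hXne : X.Nonempty)
    (hXclosed : IsClosed X) (hXconvex : Convex ℝ X)
    (P : EuclideanSpace ℝ (Fin d) → EuclideanSpace ℝ (Fin d))
    (hPmem : ∀ v, P v ∈ X)
    (hPproj : ∀ v, ∀ u ∈ X, ‖v - P v‖ ≤ ‖v - u‖)
    (f : Fin n → EuclideanSpace ℝ (Fin d) → ℝ)
    (hfdiff : ∀ i, Differentiable ℝ (f i))
    (μ L : ℝ) (hμ : 0 < μ) (hμL : μ ≤ L)
    (hstrong : ∀ i u v, μ * ‖u - v‖ ^ 2 ≤ ⟪gradient (f i) u - gradient (f i) v, u - v⟫)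
    (hsmooth : ∀ i u v, ‖gradient (f i) u - gradient (f i) v‖ ≤ L * ‖u - v‖)
    (F : EuclideanSpace ℝ (Fin d) → ℝ)
    (hF : F = fun v => (1 / (n : ℝ)) * ∑ l, f l v)
    (xs : EuclideanSpace ℝ (Fin d)) (hxsmem : xs ∈ X)
    (hxsmin : ∀ u ∈ X, F xs ≤ F u)
    (hxsuniq : ∀ u ∈ X, (∀ v ∈ X, F u ≤ F v) → u = xs)
    (φ π : Fin n → ℝ)
    (hφpos : ∀ i, 0 < φ i) (hφsum : ∑ i, φ i = 1)
    (hπpos : ∀ i, 0 < π i) (hπsum : ∑ i, π i = 1)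
    (η lam : ℝ) (hη0 : 0 < η) (hη : η < 1 / (n * L)) (hlam0 : 0 < lam) (hlam1 : lam ≤ 1)
    (x : Fin n → EuclideanSpace ℝ (Fin d))
    (w : Fin n → EuclideanSpace ℝ (Fin d))
    (hw : ∀ i, w i = (1 - lam) • x i + lam • P (x i - (η * n * π i) • gradient F (x i))) :
    Derr φ w ≤ qmax π μ η lam * Derr φ x
      + 2 * lam * qmax π μ η 1 * Real.sqrt (∑ i, φ i * ‖x i - xs‖ ^ 2) := by
  have hnpos : 0 < (n : ℝ) := by
    have := Nat.pos_of_ne_zero (NeZero.ne n)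
    exact_mod_cast this
  have hL0 : 0 < L := lt_of_lt_of_le hμ hμL
  set G : EuclideanSpace ℝ (Fin d) → EuclideanSpace ℝ (Fin d) :=
    fun v => ((1:ℝ) / n) • ∑ l, gradient (f l) v with hG
  have hgrad : ∀ v, HasGradientAt F (G v) v := by
    intro v; rw [hF]; exact hasGradientAt_avg hfdiff v
  have hgradF : ∀ v, gradient F v = G v := fun v => (hgrad v).gradient
  have hGdiff : ∀ u v : EuclideanSpace ℝ (Fin d),
      G u - G v = ((1:ℝ) / n) • ∑ l, (gradient (f l) u - gradient (f l) v) := by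
    intro u v
    rw [hG]
    simp only [← smul_sub, ← Finset.sum_sub_distrib]
  have hmono : ∀ u v : EuclideanSpace ℝ (Fin d), μ * ‖u - v‖ ^ 2 ≤ ⟪G u - G v, u - v⟫ := by
    intro u v
    rw [hGdiff, real_inner_smul_left, sum_inner]
    have hsum : (n : ℝ) * (μ * ‖u - v‖ ^ 2) ≤ ∑ l, ⟪gradient (f l) u - gradient (f l) v, u - v⟫ := by
      calc (n : ℝ) * (μ * ‖u - v‖ ^ 2) = ∑ _l : Fin n, μ * ‖u - v‖ ^ 2 := by
            rw [Finset.sum_const, card_univ, Fintype.card_fin, nsmul_eq_mul]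
        _ ≤ _ := Finset.sum_le_sum (fun l _ => hstrong l u v)
    calc μ * ‖u - v‖ ^ 2 = (1 / n) * ((n:ℝ) * (μ * ‖u - v‖ ^ 2)) := by field_simp
      _ ≤ _ := mul_le_mul_of_nonneg_left hsum (by positivity)
  have hlip : ∀ u v : EuclideanSpace ℝ (Fin d), ‖G u - G v‖ ≤ L * ‖u - v‖ := by
    intro u v
    rw [hGdiff, norm_smul, Real.norm_eq_abs, abs_of_pos (by positivity : (0:ℝ) < 1 / n)]
    have hsum : ‖∑ l, (gradient (f l) u - gradient (f l) v)‖ ≤ (n : ℝ) * (L * ‖u - v‖) := by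
      calc ‖∑ l, (gradient (f l) u - gradient (f l) v)‖
          ≤ ∑ l, ‖gradient (f l) u - gradient (f l) v‖ := norm_sum_le _ _
        _ ≤ ∑ _l : Fin n, L * ‖u - v‖ := Finset.sum_le_sum (fun l _ => hsmooth l u v)
        _ = (n : ℝ) * (L * ‖u - v‖) := by
            rw [Finset.sum_const, card_univ, Fintype.card_fin, nsmul_eq_mul]
    calc (1 / n) * ‖∑ l, (gradient (f l) u - gradient (f l) v)‖
        ≤ (1 / n) * ((n:ℝ) * (L * ‖u - v‖)) :=
          mul_le_mul_of_nonneg_left hsum (by positivity)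
      _ = L * ‖u - v‖ := by field_simp
  -- step sizes
  have hπle1 : ∀ i, π i ≤ 1 := by
    intro i
    calc π i ≤ ∑ j, π j := Finset.single_le_sum (fun j _ => (hπpos j).le) (mem_univ i)
      _ = 1 := hπsum
  have hα0 : ∀ i, 0 < η * n * π i := fun i => mul_pos (mul_pos hη0 hnpos) (hπpos i)
  have hαL : ∀ i, (η * n * π i) * L ≤ 1 := by
    intro i
    have hηnL : η * ((n:ℝ) * L) < 1 := by
      rw [← lt_div_iff₀ (mul_pos hnpos hL0)]
      exact hη
    have h1 : (η * n * π i) * L ≤ η * ((n:ℝ) * L) := by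
      have := hπle1 i
      have h2 : (η * n * π i) * L = (η * ((n:ℝ) * L)) * π i := by ring
      rw [h2]
      exact mul_le_of_le_one_right (by positivity) (hπle1 i)
    linarith
  have hαμ : ∀ i, (η * n * π i) * μ ≤ 1 := fun i =>
    le_trans (by nlinarith [hα0 i, hμ, hμL]) (hαL i)
  -- contraction of projected gradient steps
  have hne := proj_nonexp hXconvex hPmem hPproj
  have hPT : ∀ (i : Fin n) (a b : EuclideanSpace ℝ (Fin d)),
      ‖P (a - (η * n * π i) • G a) - P (b - (η * n * π i) • G b)‖
        ≤ (1 - (η * n * π i) * μ) * ‖a - b‖ := fun i a b =>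
    le_trans (hne _ _) (contraction hμ hμL hgrad hmono hlip (hα0 i).le (hαL i) a b)
  have hvi : ∀ u ∈ X, 0 ≤ ⟪G xs, u - xs⟫ := fun u hu =>
    var_ineq hXconvex hL0.le
      (fun a b => (quad_bounds hL0.le hgrad hmono hlip a b).2) hxsmem hxsmin hu
  have hfix : ∀ i : Fin n, P (xs - (η * n * π i) • G xs) = xs := fun i =>
    proj_fixed hXconvex hPmem hPproj hxsmem hvi (hα0 i).le
  -- qmax facts
  obtain ⟨i0, _⟩ := Finset.univ_nonempty (α := Fin n)
  have hq : ∀ i, 1 - lam * (η * n * π i) * μ ≤ qmax π μ η lam := fun i =>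
    Finset.le_sup' (fun i => 1 - lam * (η * (n:ℝ) * π i) * μ) (mem_univ i)
  have hq1 : ∀ i, 1 - (η * n * π i) * μ ≤ qmax π μ η 1 := by
    intro i
    have := Finset.le_sup' (fun i => 1 - (1:ℝ) * (η * (n:ℝ) * π i) * μ) (mem_univ i)
    rw [qmax]
    calc 1 - (η * n * π i) * μ = 1 - (1:ℝ) * (η * (n:ℝ) * π i) * μ := by ring
      _ ≤ _ := this
  have hρ0 : ∀ i, 0 ≤ 1 - (η * n * π i) * μ := fun i => by linarith [hαμ i]
  have hq0 : 0 ≤ qmax π μ η lam := by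
    refine le_trans ?_ (hq i0)
    nlinarith [hαμ i0, hα0 i0, hμ]
  have hq10 : 0 ≤ qmax π μ η 1 := le_trans (hρ0 i0) (hq1 i0)
  -- pointwise bound
  have hpoint : ∀ i j, ‖w i - w j‖
      ≤ qmax π μ η lam * ‖x i - x j‖ + 2 * lam * qmax π μ η 1 * ‖x j - xs‖ := by
    intro i j
    have hSS : P (xs - (η * n * π i) • G xs) = P (xs - (η * n * π j) • G xs) := by
      rw [hfix i, hfix j]
    have hvecij : w i - w j = (1 - lam) • (x i - x j)
        + lam • (P (x i - (η * n * π i) • G (x i)) - P (x j - (η * n * π i) • G (x j)))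
        + lam • (P (x j - (η * n * π i) • G (x j)) - P (xs - (η * n * π i) • G xs))
        + lam • (P (xs - (η * n * π j) • G xs) - P (x j - (η * n * π j) • G (x j))) := by
      rw [hw i, hw j, hgradF, hgradF, hSS]
      module
    have htri : ‖w i - w j‖ ≤ (1 - lam) * ‖x i - x j‖
        + lam * ‖P (x i - (η * n * π i) • G (x i)) - P (x j - (η * n * π i) • G (x j))‖
        + lam * ‖P (x j - (η * n * π i) • G (x j)) - P (xs - (η * n * π i) • G xs)‖
        + lam * ‖P (xs - (η * n * π j) • G xs) - P (x j - (η * n * π j) • G (x j))‖ := by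
      rw [hvecij]
      have t1 := norm_add_le ((1 - lam) • (x i - x j)
        + lam • (P (x i - (η * n * π i) • G (x i)) - P (x j - (η * n * π i) • G (x j)))
        + lam • (P (x j - (η * n * π i) • G (x j)) - P (xs - (η * n * π i) • G xs)))
        (lam • (P (xs - (η * n * π j) • G xs) - P (x j - (η * n * π j) • G (x j))))
      have t2 := norm_add_le ((1 - lam) • (x i - x j)
        + lam • (P (x i - (η * n * π i) • G (x i)) - P (x j - (η * n * π i) • G (x j))))
        (lam • (P (x j - (η * n * π i) • G (x j)) - P (xs - (η * n * π i) • G xs)))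
      have t3 := norm_add_le ((1 - lam) • (x i - x j))
        (lam • (P (x i - (η * n * π i) • G (x i)) - P (x j - (η * n * π i) • G (x j))))
      simp only [norm_smul, Real.norm_eq_abs, abs_of_nonneg (by linarith : (0:ℝ) ≤ 1 - lam),
        abs_of_pos hlam0] at t1 t2 t3 ⊢
      linarith
    have b1 := hPT i (x i) (x j)
    have b2 := hPT i (x j) xs
    have b3 := hPT j xs (x j)
    have hns : ‖xs - x j‖ = ‖x j - xs‖ := norm_sub_rev _ _
    rw [hns] at b3
    have hcomb : (1 - lam) * ‖x i - x j‖ + lam * ((1 - (η * n * π i) * μ) * ‖x i - x j‖)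
        = (1 - lam * (η * n * π i) * μ) * ‖x i - x j‖ := by ring
    have hb1 : (1 - lam * (η * n * π i) * μ) * ‖x i - x j‖
        ≤ qmax π μ η lam * ‖x i - x j‖ :=
      mul_le_mul_of_nonneg_right (hq i) (norm_nonneg _)
    have hb2 : lam * ((1 - (η * n * π i) * μ) * ‖x j - xs‖)
        ≤ lam * (qmax π μ η 1 * ‖x j - xs‖) :=
      mul_le_mul_of_nonneg_left
        (mul_le_mul_of_nonneg_right (hq1 i) (norm_nonneg _)) hlam0.le
    have hb3 : lam * ((1 - (η * n * π j) * μ) * ‖x j - xs‖)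
        ≤ lam * (qmax π μ η 1 * ‖x j - xs‖) :=
      mul_le_mul_of_nonneg_left
        (mul_le_mul_of_nonneg_right (hq1 j) (norm_nonneg _)) hlam0.le
    have m1 : lam * ‖P (x i - (η * n * π i) • G (x i)) - P (x j - (η * n * π i) • G (x j))‖
        ≤ lam * ((1 - (η * n * π i) * μ) * ‖x i - x j‖) :=
      mul_le_mul_of_nonneg_left b1 hlam0.le
    have m2 : lam * ‖P (x j - (η * n * π i) • G (x j)) - P (xs - (η * n * π i) • G xs)‖
        ≤ lam * ((1 - (η * n * π i) * μ) * ‖x j - xs‖) :=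
      mul_le_mul_of_nonneg_left b2 hlam0.le
    have m3 : lam * ‖P (xs - (η * n * π j) • G xs) - P (x j - (η * n * π j) • G (x j))‖
        ≤ lam * ((1 - (η * n * π j) * μ) * ‖x j - xs‖) :=
      mul_le_mul_of_nonneg_left b3 hlam0.le
    linarith [htri, m1, m2, m3, hb1, hb2, hb3, hcomb]
  -- final summation step
  have hDw : Derr φ w = Real.sqrt (∑ p : Fin n × Fin n, φ p.1 * φ p.2 * ‖w p.1 - w p.2‖ ^ 2) := by
    rw [Derr, Fintype.sum_prod_type]
  have hDx : Derr φ x = Real.sqrt (∑ p : Fin n × Fin n, φ p.1 * φ p.2 * ‖x p.1 - x p.2‖ ^ 2) := by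
    rw [Derr, Fintype.sum_prod_type]
  rw [hDw, hDx]
  set Sx := ∑ p : Fin n × Fin n, φ p.1 * φ p.2 * ‖x p.1 - x p.2‖ ^ 2 with hSxd
  set Ss := ∑ i, φ i * ‖x i - xs‖ ^ 2 with hSsd
  have hφφ : ∀ p : Fin n × Fin n, 0 < φ p.1 * φ p.2 := fun p => mul_pos (hφpos p.1) (hφpos p.2)
  have hSx0 : 0 ≤ Sx := Finset.sum_nonneg fun p _ => mul_nonneg (hφφ p).le (sq_nonneg _)
  have hSs0 : 0 ≤ Ss := Finset.sum_nonneg fun i _ => mul_nonneg (hφpos i).le (sq_nonneg _)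
  have hc0 : 0 ≤ 2 * lam * qmax π μ η 1 :=
    mul_nonneg (mul_nonneg (by norm_num) hlam0.le) hq10
  set a : Fin n × Fin n → ℝ :=
    fun p => Real.sqrt (φ p.1 * φ p.2) * (qmax π μ η lam * ‖x p.1 - x p.2‖) with had
  set b : Fin n × Fin n → ℝ :=
    fun p => Real.sqrt (φ p.1 * φ p.2) * (2 * lam * qmax π μ η 1 * ‖x p.2 - xs‖) with hbd
  have hsqr : ∀ p : Fin n × Fin n, Real.sqrt (φ p.1 * φ p.2) ^ 2 = φ p.1 * φ p.2 :=
    fun p => Real.sq_sqrt (hφφ p).le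
  have ha0 : ∀ p, 0 ≤ a p := fun p =>
    mul_nonneg (Real.sqrt_nonneg _) (mul_nonneg hq0 (norm_nonneg _))
  have hb0 : ∀ p, 0 ≤ b p := fun p =>
    mul_nonneg (Real.sqrt_nonneg _) (mul_nonneg hc0 (norm_nonneg _))
  have hSa : ∑ p : Fin n × Fin n, a p ^ 2 = qmax π μ η lam ^ 2 * Sx := by
    rw [hSxd, Finset.mul_sum]
    refine Finset.sum_congr rfl fun p _ => ?_
    rw [had]
    simp only []
    rw [mul_pow, hsqr p, mul_pow]
    ring
  have hSb : ∑ p : Fin n × Fin n, b p ^ 2 = (2 * lam * qmax π μ η 1) ^ 2 * Ss := by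
    calc ∑ p : Fin n × Fin n, b p ^ 2
        = ∑ p : Fin n × Fin n,
            φ p.1 * (φ p.2 * ((2 * lam * qmax π μ η 1) ^ 2 * ‖x p.2 - xs‖ ^ 2)) := by
          refine Finset.sum_congr rfl fun p _ => ?_
          rw [hbd]
          simp only []
          rw [mul_pow, hsqr p, mul_pow]
          ring
      _ = ∑ i, φ i * ∑ j, φ j * ((2 * lam * qmax π μ η 1) ^ 2 * ‖x j - xs‖ ^ 2) := by
          rw [Fintype.sum_prod_type]
          exact Finset.sum_congr rfl fun i _ => by rw [Finset.mul_sum]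
      _ = (∑ i, φ i) * ∑ j, φ j * ((2 * lam * qmax π μ η 1) ^ 2 * ‖x j - xs‖ ^ 2) := by
          rw [← Finset.sum_mul]
      _ = (2 * lam * qmax π μ η 1) ^ 2 * Ss := by
          rw [hφsum, one_mul, hSsd, Finset.mul_sum]
          exact Finset.sum_congr rfl fun j _ => by ring
  have hab : ∑ p : Fin n × Fin n, a p * b p
      ≤ (qmax π μ η lam * Real.sqrt Sx) * (2 * lam * qmax π μ η 1 * Real.sqrt Ss) := by
    have cs := Finset.sum_mul_sq_le_sq_mul_sq Finset.univ a b
    have h1 : 0 ≤ ∑ p : Fin n × Fin n, a p * b p :=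
      Finset.sum_nonneg fun p _ => mul_nonneg (ha0 p) (hb0 p)
    calc ∑ p : Fin n × Fin n, a p * b p
        = Real.sqrt ((∑ p : Fin n × Fin n, a p * b p) ^ 2) := (Real.sqrt_sq h1).symm
      _ ≤ Real.sqrt ((∑ p : Fin n × Fin n, a p ^ 2) * ∑ p : Fin n × Fin n, b p ^ 2) :=
          Real.sqrt_le_sqrt cs
      _ = Real.sqrt (qmax π μ η lam ^ 2 * Sx) * Real.sqrt ((2 * lam * qmax π μ η 1) ^ 2 * Ss) := by
          rw [hSa, hSb, Real.sqrt_mul (by positivity)]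
      _ = (qmax π μ η lam * Real.sqrt Sx) * (2 * lam * qmax π μ η 1 * Real.sqrt Ss) := by
          rw [Real.sqrt_mul (sq_nonneg _), Real.sqrt_mul (sq_nonneg _),
            Real.sqrt_sq hq0, Real.sqrt_sq hc0]
  have hptsq : ∀ p : Fin n × Fin n, φ p.1 * φ p.2 * ‖w p.1 - w p.2‖ ^ 2 ≤ (a p + b p) ^ 2 := by
    intro p
    have h1 : a p + b p = Real.sqrt (φ p.1 * φ p.2)
        * (qmax π μ η lam * ‖x p.1 - x p.2‖ + 2 * lam * qmax π μ η 1 * ‖x p.2 - xs‖) := by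
      rw [had, hbd]; ring
    rw [h1, mul_pow, hsqr p]
    have h2 : ‖w p.1 - w p.2‖ ^ 2
        ≤ (qmax π μ η lam * ‖x p.1 - x p.2‖ + 2 * lam * qmax π μ η 1 * ‖x p.2 - xs‖) ^ 2 :=
      pow_le_pow_left₀ (norm_nonneg _) (hpoint p.1 p.2) 2
    exact mul_le_mul_of_nonneg_left h2 (hφφ p).le
  have hsum : ∑ p : Fin n × Fin n, φ p.1 * φ p.2 * ‖w p.1 - w p.2‖ ^ 2
      ≤ (qmax π μ η lam * Real.sqrt Sx + 2 * lam * qmax π μ η 1 * Real.sqrt Ss) ^ 2 := by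
    calc ∑ p : Fin n × Fin n, φ p.1 * φ p.2 * ‖w p.1 - w p.2‖ ^ 2
        ≤ ∑ p : Fin n × Fin n, (a p + b p) ^ 2 := Finset.sum_le_sum fun p _ => hptsq p
      _ = ∑ p : Fin n × Fin n, (a p ^ 2 + 2 * (a p * b p) + b p ^ 2) :=
          Finset.sum_congr rfl fun p _ => by ring
      _ = (∑ p : Fin n × Fin n, a p ^ 2) + 2 * (∑ p : Fin n × Fin n, a p * b p)
            + ∑ p : Fin n × Fin n, b p ^ 2 := by
          rw [Finset.sum_add_distrib, Finset.sum_add_distrib, Finset.mul_sum]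
      _ ≤ qmax π μ η lam ^ 2 * Sx
            + 2 * ((qmax π μ η lam * Real.sqrt Sx) * (2 * lam * qmax π μ η 1 * Real.sqrt Ss))
            + (2 * lam * qmax π μ η 1) ^ 2 * Ss := by
          rw [hSa, hSb]
          linarith [hab]
      _ = (qmax π μ η lam * Real.sqrt Sx + 2 * lam * qmax π μ η 1 * Real.sqrt Ss) ^ 2 := by
          have e1 : Real.sqrt Sx ^ 2 = Sx := Real.sq_sqrt hSx0
          have e2 : Real.sqrt Ss ^ 2 = Ss := Real.sq_sqrt hSs0
          linear_combination (-(qmax π μ η lam ^ 2)) * e1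
            - 4 * lam ^ 2 * qmax π μ η 1 ^ 2 * e2
  have hrhs0 : 0 ≤ qmax π μ η lam * Real.sqrt Sx + 2 * lam * qmax π μ η 1 * Real.sqrt Ss :=
    add_nonneg (mul_nonneg hq0 (Real.sqrt_nonneg _)) (mul_nonneg hc0 (Real.sqrt_nonneg _))
  calc Real.sqrt (∑ p : Fin n × Fin n, φ p.1 * φ p.2 * ‖w p.1 - w p.2‖ ^ 2)
      ≤ Real.sqrt ((qmax π μ η lam * Real.sqrt Sx
          + 2 * lam * qmax π μ η 1 * Real.sqrt Ss) ^ 2) := Real.sqrt_le_sqrt hsum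
    _ = qmax π μ η lam * Real.sqrt Sx + 2 * lam * qmax π μ η 1 * Real.sqrt Ss :=
        Real.sqrt_sq hrhs0
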